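/- For the complete graph K_n with n ≥ 2, the number of κ-equivalence classes of acyclic orientations equals (n−1)!, i.e., κ(K_n) = (n−1)!. -/

import Mathlib

/-- An orientation of a simple graph: a choice of direction for each edge. -/
structure GraphOrientation {V : Type*} (G : SimpleGraph V) where
  dir : V → V → Prop
  consistent : ∀ u v, G.Adj u v ↔ (dir u v ∨ dir v u)
  asymm : ∀ u v, dir u v → ¬ dir v u

/-- An orientation is acyclic if its directed graph has no directed cycle. -/
def GraphOrientation.IsAcyclic {V : Type*} {G : SimpleGraph V} (O : GraphOrientation G) : Prop :=
  ∀ v, ¬ Relation.TransGen O.dir v v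

/-- The type of acyclic orientations of `G`. -/
def AcycGraphOrientation {V : Type*} (G : SimpleGraph V) := {O : GraphOrientation G // O.IsAcyclic}

/-- `Click O O'` holds when `O'` is obtained from `O` by a source-to-sink operation:
reversing all edges incident to some source vertex `v`. -/
def Click {V : Type*} {G : SimpleGraph V} (O O' : GraphOrientation G) : Prop :=
  ∃ v, (∀ u, ¬ O.dir u v) ∧
    ∀ u w, O'.dir u w ↔ (((u = v ∨ w = v) ∧ O.dir w u) ∨ (u ≠ v ∧ w ≠ v ∧ O.dir u w))

/-- κ(G): the number of equivalence classes of acyclic orientations of `G` under the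
equivalence generated by source-to-sink operations. -/
noncomputable def kappa {V : Type*} (G : SimpleGraph V) : ℕ :=
  Nat.card (Quot (fun A B : AcycGraphOrientation G => Click A.1 B.1))

namespace KappaAux

open Equiv

variable {n : ℕ}

lemma orient_ext {V : Type*} {G : SimpleGraph V} {O O' : GraphOrientation G}
    (h : O.dir = O'.dir) : O = O' := by
  cases O; cases O'; cases h; rfl

/-- The orientation of `K_n` induced by a permutation. -/
def toO (σ : Equiv.Perm (Fin n)) : GraphOrientation (⊤ : SimpleGraph (Fin n)) where
  dir u v := σ u < σ v
  consistent u v := by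
    simp only [SimpleGraph.top_adj]
    constructor
    · intro h
      exact lt_or_gt_of_ne (fun hc => h (σ.injective hc))
    · rintro (h | h) rfl <;> exact lt_irrefl _ h
  asymm u v h := not_lt_of_gt h

lemma toO_acyclic (σ : Equiv.Perm (Fin n)) : (toO σ).IsAcyclic := by
  intro v hv
  have : Transitive (toO σ).dir := fun a b c hab hbc => lt_trans hab hbc
  rw [@Relation.transGen_eq_self _ _ ⟨this⟩] at hv
  exact lt_irrefl _ hv

lemma dir_trans {O : GraphOrientation (⊤ : SimpleGraph (Fin n))} (hO : O.IsAcyclic)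
    {a b c : Fin n} (hab : O.dir a b) (hbc : O.dir b c) : O.dir a c := by
  have hac : a ≠ c := by
    rintro rfl
    exact hO a ((Relation.TransGen.single hab).tail hbc)
  rcases (O.consistent a c).1 (by simpa using hac) with h | h
  · exact h
  · exact absurd (((Relation.TransGen.single hab).tail hbc).tail h) (hO a)

lemma dir_irrefl (O : GraphOrientation (⊤ : SimpleGraph (Fin n))) (a : Fin n) : ¬ O.dir a a :=
  fun h => O.asymm a a h h

/-- Count of predecessors, as an element of `Fin n`. -/
noncomputable def fcount (O : GraphOrientation (⊤ : SimpleGraph (Fin n))) (v : Fin n) : Fin n :=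
  ⟨{u | O.dir u v}.ncard, by
    have hss : {u | O.dir u v} ⊂ Set.univ := by
      refine ⟨Set.subset_univ _, fun h => ?_⟩
      exact dir_irrefl O v (h (Set.mem_univ v))
    have := Set.ncard_lt_ncard hss (Set.finite_univ)
    simpa [Set.ncard_univ] using this⟩

lemma fcount_lt (O : GraphOrientation (⊤ : SimpleGraph (Fin n))) (hO : O.IsAcyclic)
    {u v : Fin n} (h : O.dir u v) : fcount O u < fcount O v := by
  have hss : {w | O.dir w u} ⊂ {w | O.dir w v} := by
    constructor
    · intro w hw
      exact dir_trans hO hw h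
    · intro hsub
      exact dir_irrefl O u (hsub h)
  exact Set.ncard_lt_ncard hss (Set.toFinite _)

lemma dir_iff_fcount (O : GraphOrientation (⊤ : SimpleGraph (Fin n))) (hO : O.IsAcyclic)
    (u v : Fin n) : O.dir u v ↔ fcount O u < fcount O v := by
  constructor
  · exact fcount_lt O hO
  · intro hlt
    rcases eq_or_ne u v with rfl | hne
    · exact absurd hlt (lt_irrefl _)
    · rcases (O.consistent u v).1 (by simpa using hne) with h | h
      · exact h
      · exact absurd (fcount_lt O hO h) (not_lt_of_gt hlt)

lemma fcount_bijective (O : GraphOrientation (⊤ : SimpleGraph (Fin n))) (hO : O.IsAcyclic) :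
    Function.Bijective (fcount O) := by
  rw [← Finite.injective_iff_bijective]
  intro u v h
  by_contra hne
  rcases (O.consistent u v).1 (by simpa using hne) with hd | hd
  · exact absurd (h ▸ fcount_lt O hO hd) (lt_irrefl _)
  · exact absurd (h ▸ fcount_lt O hO hd) (lt_irrefl _)

lemma fcount_toO (σ : Equiv.Perm (Fin n)) (v : Fin n) : fcount (toO σ) v = σ v := by
  apply Fin.ext
  show {u | σ u < σ v}.ncard = (σ v : ℕ)
  have h1 : {u | σ u < σ v} = σ.symm '' (Set.Iio (σ v)) := by
    ext u
    simp only [Set.mem_setOf_eq, Set.mem_image, Set.mem_Iio]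
    constructor
    · intro h; exact ⟨σ u, h, by simp⟩
    · rintro ⟨x, hx, rfl⟩; simpa using hx
  rw [h1, Set.ncard_image_of_injective _ σ.symm.injective]
  rw [← Finset.coe_Iio, Set.ncard_coe_finset, Fin.card_Iio]

/-- Permutations correspond bijectively to acyclic orientations of `K_n`. -/
noncomputable def permEquiv :
    Equiv.Perm (Fin n) ≃ AcycGraphOrientation (⊤ : SimpleGraph (Fin n)) where
  toFun σ := ⟨toO σ, toO_acyclic σ⟩
  invFun A := Equiv.ofBijective (fcount A.1) (fcount_bijective A.1 A.2)
  left_inv σ := by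
    apply Equiv.ext
    intro v
    show fcount (toO σ) v = σ v
    exact fcount_toO σ v
  right_inv A := by
    apply Subtype.ext
    apply orient_ext
    funext u v
    show ((fcount A.1 u < fcount A.1 v) : Prop) = A.1.dir u v
    exact propext (dir_iff_fcount A.1 A.2 u v).symm

section clickchar

variable [NeZero n]

open Fin.NatCast

lemma val_sub_one (hn : 2 ≤ n) (a : Fin n) :
    ((a - 1 : Fin n) : ℕ) = if (a : ℕ) = 0 then n - 1 else (a : ℕ) - 1 := by
  have h1 : ((1 : Fin n) : ℕ) = 1 := by
    rw [Fin.val_one']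
    exact Nat.mod_eq_of_lt (by omega)
  have h1' : 1 % n = 1 := Nat.mod_eq_of_lt (by omega)
  have hsub : ((a - 1 : Fin n) : ℕ) = ((a : ℕ) + (n - 1)) % n := by
    rw [Fin.sub_def]
    simp only [Fin.val_one', h1']
    rw [Nat.add_comm]
  rcases eq_or_ne (a : ℕ) 0 with h | h
  · rw [if_pos h, hsub, h, Nat.zero_add]
    exact Nat.mod_eq_of_lt (by omega)
  · have ha : 1 ≤ (a : ℕ) := by omega
    have ha2 : (a : ℕ) < n := a.isLt
    have hrw : (a : ℕ) + (n - 1) = ((a : ℕ) - 1) + 1 * n := by omega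
    rw [if_neg h, hsub, hrw, Nat.add_mul_mod_self_right, Nat.mod_eq_of_lt (by omega)]

lemma sub_one_lt_sub_one_iff (hn : 2 ≤ n) (a b : Fin n) :
    a - 1 < b - 1 ↔ (((a = 0 ∨ b = 0) ∧ b < a) ∨ (a ≠ 0 ∧ b ≠ 0 ∧ a < b)) := by
  have ha := val_sub_one hn a
  have hb := val_sub_one hn b
  have ha2 : (a : ℕ) < n := a.isLt
  have hb2 : (b : ℕ) < n := b.isLt
  simp only [Fin.lt_def, Fin.ext_iff, Fin.val_zero, ne_eq]
  rw [ha, hb]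
  split_ifs <;> omega

lemma perm_eq_of_lt_iff (p q : Equiv.Perm (Fin n))
    (h : ∀ u w, p u < p w ↔ q u < q w) : p = q := by
  apply Equiv.ext
  have hle : ∀ a b : Fin n, q (p.symm a) ≤ q (p.symm b) ↔ a ≤ b := by
    intro a b
    rw [← not_lt, ← not_lt, ← h]
    simp
  intro x
  let g : Fin n ≃o Fin n := ⟨p.symm.trans q, by intro a b; exact hle a b⟩
  have hg : g = OrderIso.refl (Fin n) := Subsingleton.elim _ _
  have h3 := congrArg (fun (e : Fin n ≃o Fin n) => e (p x)) hg
  simp only [OrderIso.refl_apply] at h3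
  have h2 : q (p.symm (p x)) = p x := h3
  rw [Equiv.symm_apply_apply] at h2
  exact h2.symm

lemma click_iff (hn : 2 ≤ n) (σ τ : Equiv.Perm (Fin n)) :
    Click (toO σ) (toO τ) ↔ τ = σ.trans (Equiv.subRight (1 : Fin n)) := by
  constructor
  · rintro ⟨v, hs, hd⟩
    have hv0 : σ v = 0 := by
      have h0 : ¬ σ (σ.symm 0) < σ v := hs (σ.symm 0)
      rw [Equiv.apply_symm_apply, Fin.lt_def, not_lt, Fin.val_zero] at h0
      exact Fin.ext (Nat.le_zero.mp h0)
    apply perm_eq_of_lt_iff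
    intro u w
    have heq : ∀ x : Fin n, x = v ↔ σ x = 0 := by
      intro x
      rw [← hv0, EmbeddingLike.apply_eq_iff_eq]
    have hd' : (τ u < τ w) ↔
        (((u = v ∨ w = v) ∧ σ w < σ u) ∨ (u ≠ v ∧ w ≠ v ∧ σ u < σ w)) := hd u w
    show τ u < τ w ↔ σ u - 1 < σ w - 1
    rw [hd', sub_one_lt_sub_one_iff hn]
    simp only [ne_eq, heq]
  · rintro rfl
    refine ⟨σ.symm 0, ?_, ?_⟩
    · intro u
      show ¬ σ u < σ (σ.symm 0)
      rw [Equiv.apply_symm_apply, Fin.lt_def, Fin.val_zero]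
      omega
    · intro u w
      have heq : ∀ x : Fin n, x = σ.symm 0 ↔ σ x = 0 := by
        intro x
        rw [Equiv.eq_symm_apply, eq_comm]
      show σ u - 1 < σ w - 1 ↔
        (((u = σ.symm 0 ∨ w = σ.symm 0) ∧ σ w < σ u) ∨
          (u ≠ σ.symm 0 ∧ w ≠ σ.symm 0 ∧ σ u < σ w))
      rw [sub_one_lt_sub_one_iff hn]
      simp only [ne_eq, heq]

/-- Normalized representative of an orbit. -/
def rep (σ : Equiv.Perm (Fin n)) : Equiv.Perm (Fin n) := σ.trans (Equiv.subRight (σ 0))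

lemma rep_apply (σ : Equiv.Perm (Fin n)) (u : Fin n) : rep σ u = σ u - σ 0 := rfl

lemma rep_click (σ τ : Equiv.Perm (Fin n)) (h : τ = σ.trans (Equiv.subRight (1 : Fin n))) :
    rep σ = rep τ := by
  subst h
  apply Equiv.ext
  intro u
  show σ u - σ 0 = (σ u - 1) - (σ 0 - 1)
  rw [sub_sub_sub_cancel_right]

lemma quot_mk_trans_subRight (σ : Equiv.Perm (Fin n)) (k : ℕ) :
    Quot.mk (fun σ τ : Equiv.Perm (Fin n) => τ = σ.trans (Equiv.subRight (1 : Fin n)))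
      (σ.trans (Equiv.subRight ((k : Fin n)))) =
    Quot.mk _ σ := by
  induction k with
  | zero =>
    congr 1
    apply Equiv.ext
    intro u
    show σ u - ((0 : ℕ) : Fin n) = σ u
    simp
  | succ k ih =>
    have hstep : σ.trans (Equiv.subRight (((k + 1 : ℕ)) : Fin n)) =
        (σ.trans (Equiv.subRight ((k : Fin n)))).trans (Equiv.subRight (1 : Fin n)) := by
      apply Equiv.ext
      intro u
      show σ u - ((k + 1 : ℕ) : Fin n) = (σ u - (k : Fin n)) - 1
      rw [sub_sub]
      congr 1
      push_cast
      ring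
    rw [hstep, ← ih]
    exact (Quot.sound
      (r := fun σ τ : Equiv.Perm (Fin n) => τ = σ.trans (Equiv.subRight (1 : Fin n)))
      rfl).symm

/-- The quotient by the single-click relation is equivalent to permutations fixing 0. -/
noncomputable def quotEquiv :
    Quot (fun σ τ : Equiv.Perm (Fin n) => τ = σ.trans (Equiv.subRight (1 : Fin n))) ≃
      {σ : Equiv.Perm (Fin n) // σ 0 = 0} where
  toFun := Quot.lift (fun σ => ⟨rep σ, by rw [rep_apply, sub_self]⟩)
    (fun σ τ h => Subtype.ext (rep_click σ τ h))
  invFun s := Quot.mk _ s.1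
  left_inv := by
    apply Quot.ind
    intro σ
    show Quot.mk _ (rep σ) = Quot.mk _ σ
    have : rep σ = σ.trans (Equiv.subRight ((((σ 0 : Fin n) : ℕ) : Fin n))) := by
      rw [Fin.cast_val_eq_self]
      rfl
    rw [this]
    exact quot_mk_trans_subRight σ _
  right_inv s := by
    apply Subtype.ext
    show rep s.1 = s.1
    apply Equiv.ext
    intro u
    rw [rep_apply, s.2, sub_zero]

end clickchar

lemma decomposeFin_fst {m : ℕ} (σ : Equiv.Perm (Fin (m + 1))) :
    (Equiv.Perm.decomposeFin σ).1 = σ 0 := by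
  conv_rhs => rw [← Equiv.symm_apply_apply Equiv.Perm.decomposeFin σ]
  rw [show Equiv.Perm.decomposeFin σ =
    ((Equiv.Perm.decomposeFin σ).1, (Equiv.Perm.decomposeFin σ).2) from rfl]
  rw [Equiv.Perm.decomposeFin_symm_apply_zero]

/-- Permutations of `Fin (m+1)` fixing `0` correspond to permutations of `Fin m`. -/
noncomputable def fixZeroEquiv (m : ℕ) :
    {σ : Equiv.Perm (Fin (m + 1)) // σ 0 = 0} ≃ Equiv.Perm (Fin m) where
  toFun s := (Equiv.Perm.decomposeFin s.1).2
  invFun e := ⟨Equiv.Perm.decomposeFin.symm (0, e), by simp⟩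
  left_inv s := by
    apply Subtype.ext
    show Equiv.Perm.decomposeFin.symm (0, (Equiv.Perm.decomposeFin s.1).2) = s.1
    have h1 : (Equiv.Perm.decomposeFin s.1).1 = 0 := by rw [decomposeFin_fst, s.2]
    calc Equiv.Perm.decomposeFin.symm (0, (Equiv.Perm.decomposeFin s.1).2)
        = Equiv.Perm.decomposeFin.symm
            ((Equiv.Perm.decomposeFin s.1).1, (Equiv.Perm.decomposeFin s.1).2) := by rw [h1]
      _ = s.1 := by rw [Prod.mk.eta, Equiv.symm_apply_apply]
  right_inv e := by
    show (Equiv.Perm.decomposeFin (Equiv.Perm.decomposeFin.symm (0, e))).2 = e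
    rw [Equiv.apply_symm_apply]

end KappaAux

theorem kappa_complete_graph (n : ℕ) (hn : 2 ≤ n) :
    kappa (⊤ : SimpleGraph (Fin n)) = (n - 1).factorial := by
  haveI : NeZero n := ⟨by omega⟩
  obtain ⟨m, rfl⟩ : ∃ m, n = m + 1 := ⟨n - 1, by omega⟩
  unfold kappa
  have e1 : Quot (fun σ τ : Equiv.Perm (Fin (m + 1)) =>
        τ = σ.trans (Equiv.subRight (1 : Fin (m + 1)))) ≃
      Quot (fun A B : AcycGraphOrientation (⊤ : SimpleGraph (Fin (m + 1))) =>
        Click A.1 B.1) := by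
    refine Quot.congr KappaAux.permEquiv ?_
    intro σ τ
    exact (KappaAux.click_iff hn σ τ).symm
  have e : Quot (fun A B : AcycGraphOrientation (⊤ : SimpleGraph (Fin (m + 1))) =>
        Click A.1 B.1) ≃ Equiv.Perm (Fin m) :=
    (e1.symm.trans KappaAux.quotEquiv).trans (KappaAux.fixZeroEquiv m)
  rw [Nat.card_congr e, Nat.card_eq_fintype_card, Fintype.card_perm, Fintype.card_fin]
  simp
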